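/- Let d = 1 and q small. The mean hitting time of the event {η(0) = 0} for the stationary FA1f process on ℤ satisfies E_μ(τ_0) ≥ C q^{−3} for some constant C > 0. -/

import Mathlib

open Finset ENNReal

noncomputable section

/-- The configuration `η` flipped at site `x ∈ ℤ`. -/
def flipZ (η : ℤ → Bool) (x : ℤ) : ℤ → Bool :=
  fun y => if y = x then !(η y) else η y

/-- Extension of a configuration on a finite set of sites by fully occupied outside. -/
def extendZ (s : Finset ℤ) (η : ↥s → Bool) : ℤ → Bool :=
  fun x => if h : x ∈ s then η ⟨x, h⟩ else true

/-- Expectation, under the product Bernoulli(1−q) measure (`true` = occupied, probability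
`1−q`; `false` = empty, probability `q`), of a function depending only on sites in `s`. -/
def ElocZ (q : ℝ) (s : Finset ℤ) (g : (ℤ → Bool) → ℝ) : ℝ :=
  ∑ η : ↥s → Bool, (∏ v : ↥s, if η v then (1 - q) else q) * g (extendZ s η)

/-- The FA1f constraint on `ℤ` (as a real indicator): a neighbour of `x` is empty. -/
def cIndZ (η : ℤ → Bool) (x : ℤ) : ℝ :=
  if η (x - 1) = false ∨ η (x + 1) = false then 1 else 0

/-- The FA1f Dirichlet form on `ℤ` of a function depending only on sites in `s`. -/
def DformZ (q : ℝ) (s : Finset ℤ) (f : (ℤ → Bool) → ℝ) : ℝ :=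
  q * (1 - q) * ∑' x : ℤ,
    ElocZ q (s ∪ {x - 1, x, x + 1}) (fun η => cIndZ η x * (f (flipZ η x) - f η) ^ 2)

/-- `ξ(η) = inf{|x| : η(x) = 0}`, the distance from the origin to the nearest empty site. -/
def xiZ (η : ℤ → Bool) : ℕ :=
  sInf {k : ℕ | ∃ x : ℤ, x.natAbs = k ∧ η x = false}

/-- The test function `f(η) = ξ·1_{ξ<ℓ} + (2ℓ−ξ)·1_{ℓ≤ξ<2ℓ}`. -/
def fPers (ℓ : ℕ) (η : ℤ → Bool) : ℝ :=
  if xiZ η < ℓ then (xiZ η : ℝ)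
  else if xiZ η < 2 * ℓ then (2 * ℓ : ℝ) - (xiZ η : ℝ) else 0

/-- The window `{x : |x| ≤ 2ℓ}` on which `fPers ℓ` depends. -/
def windowZ (ℓ : ℕ) : Finset ℤ := Finset.Icc (-(2 * ℓ : ℤ)) (2 * ℓ : ℤ)

/-- `f` depends only on the sites in `s`. -/
def localOnZ (s : Finset ℤ) (f : (ℤ → Bool) → ℝ) : Prop :=
  ∀ η η' : ℤ → Bool, (∀ x ∈ s, η x = η' x) → f η = f η'

/-- The mean hitting time `E_μ(τ_0)` of the event `{η(0) = 0}` for the stationary FA1f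
process on `ℤ`, via the variational principle
`E_μ(τ_0) = sup{μ(f)²/D(f) : f local, f = 0 on {η(0) = 0}}`. -/
def hitTimeZ (q : ℝ) : ℝ≥0∞ :=
  sSup {r : ℝ≥0∞ | ∃ (s : Finset ℤ) (f : (ℤ → Bool) → ℝ),
    localOnZ s f ∧ (∀ η, η 0 = false → f η = 0) ∧
    r = ENNReal.ofReal (ElocZ q s f ^ 2) / ENNReal.ofReal (DformZ q s f)}

lemma sum_weights_prod (s : Finset ℤ) (ψ : ℤ → Bool → ℝ) :
    ∑ η : ↥s → Bool, ∏ v : ↥s, ψ ↑v (η v) = ∏ x ∈ s, (ψ x true + ψ x false) := by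
  rw [← Fintype.piFinset_univ, ← Finset.prod_univ_sum]
  simp only [Fintype.sum_bool]
  exact Finset.prod_coe_sort s (fun x => ψ x true + ψ x false)

lemma extendZ_coe (s : Finset ℤ) (η : ↥s → Bool) (v : ↥s) :
    extendZ s η ↑v = η v := by
  simp [extendZ]

lemma Eloc_prod (q : ℝ) (s t : Finset ℤ) (hts : t ⊆ s) (φ : ℤ → Bool → ℝ) :
    ElocZ q s (fun η => ∏ x ∈ t, φ x (η x)) =
      ∏ x ∈ t, ((1 - q) * φ x true + q * φ x false) := by
  set ψ : ℤ → Bool → ℝ :=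
    fun x b => (if b then (1 - q) else q) * (if x ∈ t then φ x b else 1) with hψ
  have key : ∀ η : ↥s → Bool,
      (∏ v : ↥s, if η v then (1 - q) else q) * (∏ x ∈ t, φ x (extendZ s η x))
      = ∏ v : ↥s, ψ ↑v (η v) := by
    intro η
    have h2 : (∏ x ∈ t, φ x (extendZ s η x))
        = ∏ v : ↥s, (if (↑v : ℤ) ∈ t then φ ↑v (η v) else 1) := by
      have h2a : (∏ v : ↥s, if (↑v : ℤ) ∈ t then φ ↑v (η v) else 1)
          = ∏ x ∈ s, (if x ∈ t then φ x (extendZ s η x) else 1) := by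
        rw [← Finset.prod_coe_sort s (fun y => if y ∈ t then φ y (extendZ s η y) else 1)]
        exact Finset.prod_congr rfl (fun v _ => by rw [extendZ_coe])
      rw [h2a, Finset.prod_ite_mem, Finset.inter_eq_right.2 hts]
    rw [hψ, Finset.prod_mul_distrib, ← h2]
  unfold ElocZ
  rw [Finset.sum_congr rfl (fun η _ => key η), sum_weights_prod]
  have h3 : ∀ x ∈ s, (ψ x true + ψ x false)
      = (if x ∈ t then ((1 - q) * φ x true + q * φ x false) else 1) := by
    intro x _
    by_cases hx : x ∈ t <;> simp [hψ, hx]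
  rw [Finset.prod_congr rfl h3, Finset.prod_ite_mem, Finset.inter_eq_right.2 hts]

lemma Eloc_all_true (q : ℝ) (s t : Finset ℤ) (hts : t ⊆ s) :
    ElocZ q s (fun η => if ∀ x ∈ t, η x = true then 1 else 0) = (1 - q) ^ t.card := by
  have h : (fun η : ℤ → Bool => if ∀ x ∈ t, η x = true then (1:ℝ) else 0)
      = fun η => ∏ x ∈ t, (if η x = true then 1 else 0) := by
    funext η; rw [Finset.prod_boole]
  rw [h]
  exact (Eloc_prod q s t hts (fun _ b => if b = true then (1:ℝ) else 0)).trans (by simp)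

lemma Eloc_site_false (q : ℝ) (s : Finset ℤ) (x0 : ℤ) (hx : x0 ∈ s) :
    ElocZ q s (fun η => if η x0 = false then 1 else 0) = q := by
  have h : (fun η : ℤ → Bool => if η x0 = false then (1:ℝ) else 0)
      = fun η => ∏ x ∈ ({x0} : Finset ℤ), (if η x = false then 1 else 0) := by
    funext η; simp
  rw [h]
  exact (Eloc_prod q s {x0} (Finset.singleton_subset_iff.2 hx)
    (fun _ b => if b = false then (1:ℝ) else 0)).trans (by simp)

lemma Eloc_mono (q : ℝ) (hq0 : 0 ≤ q) (hq1 : q ≤ 1) (s : Finset ℤ) (f g : (ℤ → Bool) → ℝ)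
    (h : ∀ η : ↥s → Bool, f (extendZ s η) ≤ g (extendZ s η)) :
    ElocZ q s f ≤ ElocZ q s g := by
  apply Finset.sum_le_sum
  intro η _
  apply mul_le_mul_of_nonneg_left (h η)
  apply Finset.prod_nonneg
  intro v _
  split <;> linarith

lemma Eloc_nonneg (q : ℝ) (hq0 : 0 ≤ q) (hq1 : q ≤ 1) (s : Finset ℤ) (f : (ℤ → Bool) → ℝ)
    (h : ∀ η : ↥s → Bool, 0 ≤ f (extendZ s η)) :
    0 ≤ ElocZ q s f := by
  apply Finset.sum_nonneg
  intro η _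
  apply mul_nonneg _ (h η)
  apply Finset.prod_nonneg
  intro v _
  split <;> linarith

lemma Eloc_add (q : ℝ) (s : Finset ℤ) (f g : (ℤ → Bool) → ℝ) :
    ElocZ q s (fun η => f η + g η) = ElocZ q s f + ElocZ q s g := by
  unfold ElocZ
  rw [← Finset.sum_add_distrib]
  exact Finset.sum_congr rfl (fun η _ => by ring)

lemma Eloc_smul_sub (q : ℝ) (c : ℝ) (s : Finset ℤ) (f g : (ℤ → Bool) → ℝ) :
    ElocZ q s (fun η => c * (f η - g η)) = c * (ElocZ q s f - ElocZ q s g) := by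
  unfold ElocZ
  rw [mul_sub, Finset.mul_sum, Finset.mul_sum, ← Finset.sum_sub_distrib]
  exact Finset.sum_congr rfl (fun η _ => by ring)

lemma Eloc_zero_of (q : ℝ) (s : Finset ℤ) (f : (ℤ → Bool) → ℝ)
    (h : ∀ η : ↥s → Bool, f (extendZ s η) = 0) :
    ElocZ q s f = 0 := by
  unfold ElocZ
  apply Finset.sum_eq_zero
  intro η _
  rw [h η, mul_zero]

lemma xiZ_le {η : ℤ → Bool} {x : ℤ} (h : η x = false) : xiZ η ≤ x.natAbs :=
  Nat.sInf_le ⟨x, rfl, h⟩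

lemma xiZ_mem {η : ℤ → Bool} {x : ℤ} (h : η x = false) :
    ∃ z : ℤ, z.natAbs = xiZ η ∧ η z = false :=
  Nat.sInf_mem (s := {k : ℕ | ∃ x : ℤ, x.natAbs = k ∧ η x = false}) ⟨x.natAbs, x, rfl, h⟩

/-- nat-valued version of the test profile -/
def fvalN (ℓ k : ℕ) : ℕ := if k < ℓ then k else if k < 2 * ℓ then 2 * ℓ - k else 0

lemma fPers_eq_fvalN (ℓ : ℕ) (η : ℤ → Bool) : fPers ℓ η = (fvalN ℓ (xiZ η) : ℝ) := by
  unfold fPers fvalN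
  split_ifs with h1 h2
  · rfl
  · push_cast [Nat.cast_sub (le_of_lt h2)]; ring
  · simp

lemma fvalN_lip (ℓ a b : ℕ) (h1 : a ≤ b + 1) (h2 : b ≤ a + 1) :
    fvalN ℓ a ≤ fvalN ℓ b + 1 ∧ fvalN ℓ b ≤ fvalN ℓ a + 1 := by
  unfold fvalN
  split_ifs <;> omega

/-- the key flip estimate: under the FA1f constraint, ξ changes by at most 1 -/
lemma xi_flip_close {η : ℤ → Bool} {x y : ℤ} (hy : y = x - 1 ∨ y = x + 1)
    (hyf : η y = false) :
    xiZ (flipZ η x) ≤ xiZ η + 1 ∧ xiZ η ≤ xiZ (flipZ η x) + 1 := by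
  have hyx : y ≠ x := by rcases hy with h | h <;> omega
  have habs : y.natAbs ≤ x.natAbs + 1 := by rcases hy with h | h <;> omega
  have hflip_ne : ∀ z : ℤ, z ≠ x → flipZ η x z = η z := by
    intro z hz; simp [flipZ, hz]
  have hflip_x : flipZ η x x = !(η x) := by simp [flipZ]
  have hy' : flipZ η x y = false := by rw [hflip_ne y hyx]; exact hyf
  constructor
  · -- ξ' ≤ ξ + 1
    obtain ⟨z, hz, hzf⟩ := xiZ_mem hyf
    by_cases hzx : z = x
    · -- ξ = |x|, use vacancy at y for η'
      have : xiZ (flipZ η x) ≤ y.natAbs := xiZ_le hy'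
      omega
    · have : xiZ (flipZ η x) ≤ z.natAbs := xiZ_le (by rw [hflip_ne z hzx]; exact hzf)
      omega
  · -- ξ ≤ ξ' + 1
    obtain ⟨z, hz, hzf⟩ := xiZ_mem hy'
    by_cases hzx : z = x
    · have hxy : xiZ η ≤ y.natAbs := xiZ_le hyf
      omega
    · have : xiZ η ≤ z.natAbs := xiZ_le (by rw [← hflip_ne z hzx]; exact hzf)
      omega

lemma mem_windowZ {ℓ : ℕ} {z : ℤ} : z ∈ windowZ ℓ ↔ z.natAbs ≤ 2 * ℓ := by
  simp only [windowZ, Finset.mem_Icc]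
  omega

/-- if two configurations agree on the window and ξ(η') ∈ (0, 2ℓ), then ξ(η) = ξ(η') -/
lemma xi_eq_on_window {ℓ : ℕ} {η η' : ℤ → Bool}
    (hag : ∀ x ∈ windowZ ℓ, η x = η' x)
    (h0 : 0 < xiZ η') (h2 : xiZ η' < 2 * ℓ) : xiZ η = xiZ η' := by
  have hne : {k : ℕ | ∃ x : ℤ, x.natAbs = k ∧ η' x = false}.Nonempty := by
    by_contra hc
    rw [Set.not_nonempty_iff_eq_empty] at hc
    have : xiZ η' = 0 := by unfold xiZ; rw [hc]; exact Nat.sInf_empty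
    omega
  obtain ⟨z, hz, hzf⟩ := Nat.sInf_mem hne
  have hzw : z ∈ windowZ ℓ := mem_windowZ.2 (by change z.natAbs = xiZ η' at hz; omega)
  have hηz : η z = false := by rw [hag z hzw]; exact hzf
  have hle : xiZ η ≤ xiZ η' := by
    have := xiZ_le hηz
    change z.natAbs = xiZ η' at hz
    omega
  -- reverse
  obtain ⟨w, hw, hwf⟩ := xiZ_mem hηz
  have hww : w ∈ windowZ ℓ := mem_windowZ.2 (by change w.natAbs = xiZ η at hw; omega)
  have : η' w = false := by rw [← hag w hww]; exact hwf
  have := xiZ_le this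
  omega

lemma fPers_local (ℓ : ℕ) : localOnZ (windowZ ℓ) (fPers ℓ) := by
  intro η η' hag
  rw [fPers_eq_fvalN, fPers_eq_fvalN]
  congr 1
  by_cases h1 : 0 < xiZ η ∧ xiZ η < 2 * ℓ
  · have := xi_eq_on_window (ℓ := ℓ) (fun x hx => (hag x hx).symm) h1.1 h1.2
    rw [this]
  · by_cases h2 : 0 < xiZ η' ∧ xiZ η' < 2 * ℓ
    · have := xi_eq_on_window (ℓ := ℓ) hag h2.1 h2.2
      exfalso; omega
    · unfold fvalN
      split_ifs <;> omega

lemma fPers_zero_at_origin (ℓ : ℕ) : ∀ η : ℤ → Bool, η 0 = false → fPers ℓ η = 0 := by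
  intro η h
  have : xiZ η = 0 := by
    have := xiZ_le h
    simpa using this
  rw [fPers_eq_fvalN, this]
  have h0 : fvalN ℓ 0 = 0 := by unfold fvalN; split_ifs <;> omega
  rw [h0]; simp

/-- pointwise lower bound by a difference of "all occupied" indicators -/
lemma fPers_ge (ℓ m : ℕ) (hm : 1 ≤ m) (hml : m ≤ ℓ) (T T' : Finset ℤ)
    (hT : ∀ z : ℤ, z ∈ T ↔ z.natAbs < m) (hT' : ∀ z : ℤ, z ∈ T' ↔ z.natAbs ≤ ℓ)
    (η : ℤ → Bool) :
    (m : ℝ) * ((if ∀ x ∈ T, η x = true then 1 else 0)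
      - (if ∀ x ∈ T', η x = true then 1 else 0))
    ≤ fPers ℓ η := by
  have hnn : (0:ℝ) ≤ fPers ℓ η := by
    rw [fPers_eq_fvalN]; positivity
  by_cases hA : ∀ x ∈ T, η x = true
  case neg => simp only [if_neg hA]; split_ifs <;> nlinarith [hnn]
  by_cases hB : ∀ x ∈ T', η x = true
  case pos => simp only [if_pos hA, if_pos hB]; linarith
  simp only [if_pos hA, if_neg hB]
  push_neg at hB
  obtain ⟨z, hzmem, hzf⟩ := hB
  have hzf' : η z = false := by simpa using hzf
  have hup : xiZ η ≤ ℓ := by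
    have := xiZ_le hzf'
    have := (hT' z).1 hzmem
    omega
  have hlo : m ≤ xiZ η := by
    by_contra hc
    push_neg at hc
    obtain ⟨w, hw, hwf⟩ := xiZ_mem hzf'
    have hwmem : w ∈ T := (hT w).2 (by omega)
    have := hA w hwmem
    rw [this] at hwf; exact absurd hwf (by simp)
  rw [fPers_eq_fvalN]
  have hfl : m ≤ fvalN ℓ (xiZ η) := by
    unfold fvalN; split_ifs <;> omega
  calc (m:ℝ) * (1 - 0) = (m:ℝ) := by ring
    _ ≤ (fvalN ℓ (xiZ η) : ℝ) := by exact_mod_cast hfl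

/-- pointwise bound on the Dirichlet integrand -/
lemma integrand_le (ℓ : ℕ) (η : ℤ → Bool) (x : ℤ) :
    cIndZ η x * (fPers ℓ (flipZ η x) - fPers ℓ η) ^ 2
    ≤ (if η (x - 1) = false then 1 else 0) + (if η (x + 1) = false then 1 else 0) := by
  have hRnn : (0:ℝ) ≤ (if η (x - 1) = false then (1:ℝ) else 0)
      + (if η (x + 1) = false then 1 else 0) := by
    split_ifs <;> norm_num
  unfold cIndZ
  by_cases hc : η (x - 1) = false ∨ η (x + 1) = false
  · rw [if_pos hc, one_mul]
    have hy : ∃ y : ℤ, (y = x - 1 ∨ y = x + 1) ∧ η y = false := by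
      rcases hc with h | h
      · exact ⟨x - 1, Or.inl rfl, h⟩
      · exact ⟨x + 1, Or.inr rfl, h⟩
    obtain ⟨y, hy1, hy2⟩ := hy
    obtain ⟨ha, hb⟩ := xi_flip_close hy1 hy2
    obtain ⟨hl1, hl2⟩ := fvalN_lip ℓ _ _ ha hb
    have hsq : (fPers ℓ (flipZ η x) - fPers ℓ η) ^ 2 ≤ 1 := by
      rw [fPers_eq_fvalN, fPers_eq_fvalN]
      have c1 : (fvalN ℓ (xiZ (flipZ η x)) : ℝ) ≤ (fvalN ℓ (xiZ η) : ℝ) + 1 := by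
        exact_mod_cast hl1
      have c2 : (fvalN ℓ (xiZ η) : ℝ) ≤ (fvalN ℓ (xiZ (flipZ η x)) : ℝ) + 1 := by
        exact_mod_cast hl2
      nlinarith
    have hR1 : (1:ℝ) ≤ (if η (x - 1) = false then (1:ℝ) else 0)
        + (if η (x + 1) = false then 1 else 0) := by
      rcases hc with h | h
      · rw [if_pos h]; split_ifs <;> norm_num
      · rw [if_pos h]; split_ifs <;> norm_num
    linarith
  · rw [if_neg hc, zero_mul]
    exact hRnn

lemma mu_lower (q : ℝ) (hq0 : 0 ≤ q) (hq1 : q ≤ 1) (m ℓ : ℕ) (hm : 1 ≤ m) (hml : m ≤ ℓ) :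
    (m:ℝ) * ((1-q)^(2*m-1) - (1-q)^(2*ℓ+1)) ≤ ElocZ q (windowZ ℓ) (fPers ℓ) := by
  set T : Finset ℤ := Finset.Icc (-(m:ℤ)+1) ((m:ℤ)-1) with hT
  set T' : Finset ℤ := Finset.Icc (-(ℓ:ℤ)) (ℓ:ℤ) with hT'
  have hTc : ∀ z : ℤ, z ∈ T ↔ z.natAbs < m := by
    intro z; rw [hT, Finset.mem_Icc]; omega
  have hT'c : ∀ z : ℤ, z ∈ T' ↔ z.natAbs ≤ ℓ := by
    intro z; rw [hT', Finset.mem_Icc]; omega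
  have hTs : T ⊆ windowZ ℓ := by
    intro z hz; rw [mem_windowZ]; have := (hTc z).1 hz; omega
  have hT's : T' ⊆ windowZ ℓ := by
    intro z hz; rw [mem_windowZ]; have := (hT'c z).1 hz; omega
  have hcard : T.card = 2*m - 1 := by rw [hT, Int.card_Icc]; omega
  have hcard' : T'.card = 2*ℓ + 1 := by rw [hT', Int.card_Icc]; omega
  have hmono := Eloc_mono q hq0 hq1 (windowZ ℓ)
    (fun η => (m:ℝ) * ((if ∀ x ∈ T, η x = true then 1 else 0)
      - (if ∀ x ∈ T', η x = true then 1 else 0))) (fPers ℓ)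
    (fun η => fPers_ge ℓ m hm hml T T' hTc hT'c _)
  rw [Eloc_smul_sub, Eloc_all_true q _ T hTs, Eloc_all_true q _ T' hT's,
    hcard, hcard'] at hmono
  exact hmono

lemma integrand_zero_outside (ℓ : ℕ) (x : ℤ) (hx : x ∉ windowZ ℓ) (η : ℤ → Bool) :
    cIndZ η x * (fPers ℓ (flipZ η x) - fPers ℓ η) ^ 2 = 0 := by
  have : fPers ℓ (flipZ η x) = fPers ℓ η := by
    apply fPers_local ℓ
    intro z hz
    have : z ≠ x := fun h => hx (h ▸ hz)
    simp [flipZ, this]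
  rw [this]
  ring

lemma Dterm_le (q : ℝ) (hq0 : 0 ≤ q) (hq1 : q ≤ 1) (ℓ : ℕ) (x : ℤ) :
    ElocZ q (windowZ ℓ ∪ {x - 1, x, x + 1})
      (fun η => cIndZ η x * (fPers ℓ (flipZ η x) - fPers ℓ η) ^ 2) ≤ 2 * q := by
  have h1 : (x - 1 : ℤ) ∈ windowZ ℓ ∪ {x - 1, x, x + 1} :=
    Finset.mem_union_right _ (by simp)
  have h2 : (x + 1 : ℤ) ∈ windowZ ℓ ∪ {x - 1, x, x + 1} :=
    Finset.mem_union_right _ (by simp)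
  have hmono := Eloc_mono q hq0 hq1 (windowZ ℓ ∪ {x - 1, x, x + 1})
    (fun η => cIndZ η x * (fPers ℓ (flipZ η x) - fPers ℓ η) ^ 2)
    (fun η => (if η (x-1) = false then (1:ℝ) else 0) + (if η (x+1) = false then 1 else 0))
    (fun η => integrand_le ℓ _ x)
  rw [Eloc_add, Eloc_site_false q _ _ h1, Eloc_site_false q _ _ h2] at hmono
  linarith

lemma card_windowZ (ℓ : ℕ) : (windowZ ℓ).card = 4 * ℓ + 1 := by
  rw [windowZ, Int.card_Icc]; omega

lemma D_upper (q : ℝ) (hq0 : 0 ≤ q) (hq1 : q ≤ 1) (ℓ : ℕ) :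
    DformZ q (windowZ ℓ) (fPers ℓ) ≤ q * (1 - q) * (((4*ℓ+1 : ℕ) : ℝ) * (2*q)) := by
  unfold DformZ
  have hsum : (∑' x : ℤ, ElocZ q (windowZ ℓ ∪ {x - 1, x, x + 1})
      (fun η => cIndZ η x * (fPers ℓ (flipZ η x) - fPers ℓ η) ^ 2))
      = ∑ x ∈ windowZ ℓ, ElocZ q (windowZ ℓ ∪ {x - 1, x, x + 1})
      (fun η => cIndZ η x * (fPers ℓ (flipZ η x) - fPers ℓ η) ^ 2) := by
    apply tsum_eq_sum
    intro x hx
    exact Eloc_zero_of q _ _ (fun η => integrand_zero_outside ℓ x hx _)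
  rw [hsum]
  apply mul_le_mul_of_nonneg_left _ (by nlinarith : (0:ℝ) ≤ q * (1 - q))
  calc (∑ x ∈ windowZ ℓ, ElocZ q (windowZ ℓ ∪ {x - 1, x, x + 1})
      (fun η => cIndZ η x * (fPers ℓ (flipZ η x) - fPers ℓ η) ^ 2))
      ≤ ∑ _x ∈ windowZ ℓ, 2*q :=
        Finset.sum_le_sum (fun x _ => Dterm_le q hq0 hq1 ℓ x)
    _ = ((4*ℓ+1 : ℕ) : ℝ) * (2*q) := by
        rw [Finset.sum_const, card_windowZ]
        simp [nsmul_eq_mul]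

lemma D_nonneg (q : ℝ) (hq0 : 0 ≤ q) (hq1 : q ≤ 1) (ℓ : ℕ) :
    0 ≤ DformZ q (windowZ ℓ) (fPers ℓ) := by
  unfold DformZ
  apply mul_nonneg (by nlinarith : (0:ℝ) ≤ q * (1 - q))
  apply tsum_nonneg
  intro x
  apply Eloc_nonneg q hq0 hq1
  intro η
  have : (0:ℝ) ≤ cIndZ (extendZ _ η) x := by unfold cIndZ; split_ifs <;> norm_num
  positivity

lemma exp_est1 : Real.exp (6/5) ≤ 10/3 := by
  have h5 : Real.exp (6/5) ^ 5 = Real.exp 6 := by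
    rw [← Real.exp_nat_mul]; norm_num
  have h6 : Real.exp 6 ≤ (10/3)^5 := by
    have : Real.exp 6 = Real.exp 1 ^ 6 := by rw [← Real.exp_nat_mul]; norm_num
    rw [this]
    have h1 : Real.exp 1 ≤ 2.7182818286 := le_of_lt Real.exp_one_lt_d9
    calc Real.exp 1 ^ 6 ≤ 2.7182818286 ^ 6 :=
          pow_le_pow_left₀ (le_of_lt (Real.exp_pos 1)) h1 6
      _ ≤ (10/3)^5 := by norm_num
  have := h5 ▸ h6
  exact le_of_pow_le_pow_left₀ (by norm_num) (by norm_num) this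

lemma exp_est2 : (20:ℝ)/3 ≤ Real.exp 2 := by
  have : Real.exp 2 = Real.exp 1 ^ 2 := by rw [← Real.exp_nat_mul]; norm_num
  rw [this]
  have h1 : (2.7182818283:ℝ) ≤ Real.exp 1 := le_of_lt Real.exp_one_gt_d9
  nlinarith

lemma pow_lower (q : ℝ) (hq0 : 0 < q) (hq : q ≤ 1/20) (n : ℕ)
    (hn : (q + 2*q^2) * n ≤ 6/5) : (3:ℝ)/10 ≤ (1-q)^n := by
  set c : ℝ := 1 + (q + 2*q^2) with hc
  have hcpos : 0 < c := by nlinarith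
  have hbase : 1/c ≤ 1 - q := by
    rw [div_le_iff₀ hcpos]; nlinarith
  have h1 : (1/c)^n ≤ (1-q)^n := pow_le_pow_left₀ (by positivity) hbase n
  have h2 : c^n ≤ Real.exp ((q + 2*q^2) * n) := by
    calc c^n ≤ Real.exp (q + 2*q^2) ^ n :=
          pow_le_pow_left₀ (le_of_lt hcpos) (by rw [hc, add_comm]; exact Real.add_one_le_exp _) n
      _ = Real.exp ((q + 2*q^2) * n) := by
          rw [← Real.exp_nat_mul]; ring_nf
  have h3 : c^n ≤ 10/3 :=
    h2.trans ((Real.exp_le_exp.2 hn).trans exp_est1)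
  have h4 : (3:ℝ)/10 ≤ 1/c^n := by
    rw [div_le_div_iff₀ (by norm_num) (by positivity)]
    nlinarith
  calc (3:ℝ)/10 ≤ 1/c^n := h4
    _ = (1/c)^n := by rw [one_div_pow]
    _ ≤ (1-q)^n := h1

lemma pow_upper (q : ℝ) (hq0 : 0 < q) (hq : q ≤ 1/20) (n : ℕ)
    (hn : (2:ℝ) ≤ q * n) : (1-q)^n ≤ 3/20 := by
  have h1 : (1-q)^n ≤ Real.exp (-q) ^ n := by
    apply pow_le_pow_left₀ (by linarith)
    have := Real.add_one_le_exp (-q)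
    linarith
  have h2 : Real.exp (-q) ^ n = Real.exp (-(q*n)) := by
    rw [← Real.exp_nat_mul]; ring_nf
  have h3 : Real.exp (-(q*n)) ≤ Real.exp (-2) := Real.exp_le_exp.2 (by linarith)
  have h4 : Real.exp (-2) ≤ 3/20 := by
    rw [Real.exp_neg]
    rw [inv_le_comm₀ (Real.exp_pos 2) (by norm_num)]
    calc (3/20 : ℝ)⁻¹ = 20/3 := by norm_num
      _ ≤ Real.exp 2 := exp_est2
  calc (1-q)^n ≤ Real.exp (-q) ^ n := h1
    _ = Real.exp (-(q*n)) := h2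
    _ ≤ 3/20 := h3.trans (by linarith [h4])

/-- in dimension `1`, `E_μ(τ_0) ≥ C q^{−3}` for small `q`. -/
theorem hitTimeZ_ge : ∃ C > (0 : ℝ), ∃ q₀ > (0 : ℝ), ∀ q : ℝ, 0 < q → q ≤ q₀ →
    ENNReal.ofReal (C * q ^ (-3 : ℤ)) ≤ hitTimeZ q := by
  refine ⟨1/1600, by norm_num, 1/20, by norm_num, ?_⟩
  intro q hq0 hq
  set m : ℕ := ⌈1/(2*q)⌉₊ with hmdef
  set ℓ : ℕ := 2*m with hldef
  have hq2 : (0:ℝ) < 2*q := by linarith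
  have hmq : 1/(2*q) ≤ (m:ℝ) := Nat.le_ceil _
  have hmq2 : (m:ℝ) < 1/(2*q) + 1 := Nat.ceil_lt_add_one (by positivity)
  have hm1 : 1 ≤ m := Nat.ceil_pos.2 (by positivity)
  have hq1 : q ≤ 1 := by linarith
  have hq0' : (0:ℝ) ≤ q := le_of_lt hq0
  -- mean lower bound
  have hmu := mu_lower q hq0' hq1 m ℓ hm1 (by omega)
  have hcast1 : ((2*m - 1 : ℕ) : ℝ) = 2*(m:ℝ) - 1 := by
    push_cast [Nat.cast_sub (by omega : 1 ≤ 2*m)]; ring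
  have hlow : (3:ℝ)/10 ≤ (1-q)^(2*m-1) := by
    apply pow_lower q hq0 hq
    rw [hcast1]
    have e1 : (q + 2*q^2) * (1/q + 1) = 1 + 3*q + 2*q^2 := by
      field_simp; ring
    have e2 : 2*(m:ℝ) - 1 ≤ 1/q + 1 := by
      have : 1/(2*q) + 1 = 1/q/2 + 1 := by ring
      rw [this] at hmq2
      have : (m:ℝ) < 1/q/2 + 1 := hmq2
      linarith
    have e3 : 0 ≤ q + 2*q^2 := by positivity
    nlinarith
  have hup : (1-q)^(2*ℓ+1) ≤ 3/20 := by
    apply pow_upper q hq0 hq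
    have : ((2*ℓ+1 : ℕ) : ℝ) = 4*(m:ℝ) + 1 := by push_cast [hldef]; ring
    rw [this]
    have : 2/q ≤ 4*(m:ℝ) := by
      have := mul_le_mul_of_nonneg_left hmq (by norm_num : (0:ℝ) ≤ 4)
      calc 2/q = 4 * (1/(2*q)) := by ring
        _ ≤ 4*(m:ℝ) := this
    calc (2:ℝ) = q * (2/q) := by field_simp
      _ ≤ q * (4*(m:ℝ) + 1) := by nlinarith
  have hmupos : (0:ℝ) < 3/(40*q) := by positivity
  have hE : 3/(40*q) ≤ ElocZ q (windowZ ℓ) (fPers ℓ) := by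
    have h1 : (m:ℝ) * (3/20) ≤ (m:ℝ) * ((1-q)^(2*m-1) - (1-q)^(2*ℓ+1)) := by
      apply mul_le_mul_of_nonneg_left _ (by positivity)
      linarith
    have h2 : 3/(40*q) ≤ (m:ℝ) * (3/20) := by
      have : 1/(2*q) * (3/20) ≤ (m:ℝ) * (3/20) :=
        mul_le_mul_of_nonneg_right hmq (by norm_num)
      calc 3/(40*q) = 1/(2*q) * (3/20) := by ring
        _ ≤ (m:ℝ) * (3/20) := this
    linarith
  -- Dirichlet form upper bound
  have hD : DformZ q (windowZ ℓ) (fPers ℓ) ≤ 9*q := by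
    have h1 := D_upper q hq0' hq1 ℓ
    have hcast : ((4*ℓ+1 : ℕ) : ℝ) = 8*(m:ℝ) + 1 := by push_cast [hldef]; ring
    rw [hcast] at h1
    have h2 : (8*(m:ℝ) + 1) * (2*q) ≤ 9 := by
      have h3 : 2*q*(m:ℝ) < 1 + 2*q := by
        have := mul_lt_mul_of_pos_left hmq2 hq2
        calc 2*q*(m:ℝ) < 2*q*(1/(2*q) + 1) := this
          _ = 1 + 2*q := by field_simp
      nlinarith
    have h4 : q * (1-q) * ((8*(m:ℝ) + 1) * (2*q)) ≤ 9*q := by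
      have hnn : (0:ℝ) ≤ (8*(m:ℝ) + 1) * (2*q) := by positivity
      set X : ℝ := (8*(m:ℝ) + 1) * (2*q) with hX
      have h5 : q*X ≤ q*9 := mul_le_mul_of_nonneg_left h2 hq0'
      have h6 : 0 ≤ q*q*X := mul_nonneg (mul_nonneg hq0' hq0') hnn
      nlinarith [h5, h6]
    linarith
  -- assemble in ℝ≥0∞
  have hmem : ENNReal.ofReal (ElocZ q (windowZ ℓ) (fPers ℓ) ^ 2) /
      ENNReal.ofReal (DformZ q (windowZ ℓ) (fPers ℓ)) ∈
      {r : ℝ≥0∞ | ∃ (s : Finset ℤ) (f : (ℤ → Bool) → ℝ),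
        localOnZ s f ∧ (∀ η, η 0 = false → f η = 0) ∧
        r = ENNReal.ofReal (ElocZ q s f ^ 2) / ENNReal.ofReal (DformZ q s f)} :=
    ⟨windowZ ℓ, fPers ℓ, fPers_local ℓ, fPers_zero_at_origin ℓ, rfl⟩
  have hsup := le_sSup hmem
  refine le_trans ?_ hsup
  have step1 : ENNReal.ofReal (DformZ q (windowZ ℓ) (fPers ℓ)) ≤ ENNReal.ofReal (9*q) :=
    ENNReal.ofReal_le_ofReal hD
  have step2 : ENNReal.ofReal (ElocZ q (windowZ ℓ) (fPers ℓ) ^ 2) / ENNReal.ofReal (9*q) ≤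
      ENNReal.ofReal (ElocZ q (windowZ ℓ) (fPers ℓ) ^ 2) /
      ENNReal.ofReal (DformZ q (windowZ ℓ) (fPers ℓ)) :=
    ENNReal.div_le_div_left step1 _
  refine le_trans ?_ step2
  rw [← ENNReal.ofReal_div_of_pos (by linarith : (0:ℝ) < 9*q)]
  apply ENNReal.ofReal_le_ofReal
  -- real inequality: (1/1600) * q⁻³ ≤ E² / (9q)
  have hzp : q ^ (-3 : ℤ) = (q^3)⁻¹ := by
    rw [zpow_neg, zpow_ofNat]
  rw [hzp]
  have hE2 : (3/(40*q))^2 ≤ ElocZ q (windowZ ℓ) (fPers ℓ) ^ 2 :=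
    pow_le_pow_left₀ (le_of_lt hmupos) hE 2
  have hEsq : 9/(1600*q^2) ≤ ElocZ q (windowZ ℓ) (fPers ℓ) ^ 2 := by
    have heq : (3/(40*q))^2 = 9/(1600*q^2) := by
      field_simp; ring
    linarith [heq ▸ hE2]
  calc 1/1600 * (q^3)⁻¹ = (9/(1600*q^2)) / (9*q) := by
        field_simp
    _ ≤ ElocZ q (windowZ ℓ) (fPers ℓ) ^ 2 / (9*q) :=
        (div_le_div_iff_of_pos_right (by linarith : (0:ℝ) < 9*q)).2 hEsq

end
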